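/- Let d, δ, s be such that the masks m_1 = e_1, m_{2j} = e_1 + e_{j+1}, m_{2j+1} = e_1 + i·e_{j+1} for j = 1, ..., δ-1 are vectors in ℂ^d. Then the collection {S_ℓ m_j m_j^* S_ℓ^* : ℓ ∈ {0,...,d-1}, j ∈ {1,...,2δ-1}} spans T_δ(ℂ^{d×d}), the space of matrices supported within circular bandwidth δ; in particular, it is a basis since its cardinality d(2δ-1) equals the dimension of T_δ(ℂ^{d×d}). -/

import Mathlib

open Matrix

/-- circular distance between indices in `Fin d` -/
def circDist {d : ℕ} (j k : Fin d) : ℕ :=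
  min ((j:ℤ) - (k:ℤ)).natAbs (d - ((j:ℤ) - (k:ℤ)).natAbs)

/-- the subspace `T_δ(ℂ^{d×d})` of matrices supported within circular bandwidth `δ` -/
noncomputable def bandSubmodule (d δ : ℕ) : Submodule ℂ (Matrix (Fin d) (Fin d) ℂ) where
  carrier := {A | ∀ j k : Fin d, δ ≤ circDist j k → A j k = 0}
  add_mem' := by
    intro A B hA hB j k h
    simp [Matrix.add_apply, hA j k h, hB j k h]
  zero_mem' := by intro j k h; rfl
  smul_mem' := by
    intro c A hA j k h
    simp [Matrix.smul_apply, hA j k h]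

/-- the masks `m_1 = e_1`, `m_{2t} = e_1 + e_{t+1}`, `m_{2t+1} = e_1 + i e_{t+1}`
(indexed from 0, so `j : Fin (2δ-1)` corresponds to mask `m_{j+1}`). -/
def masks (d δ : ℕ) (j : Fin (2 * δ - 1)) : Fin d → ℂ := fun k =>
  (if (k : ℕ) = 0 then 1 else 0) +
  (if (j : ℕ) % 2 = 1 ∧ (k : ℕ) = ((j : ℕ) + 1) / 2 then 1 else 0) +
  (if (j : ℕ) ≠ 0 ∧ (j : ℕ) % 2 = 0 ∧ (k : ℕ) = (j : ℕ) / 2 then Complex.I else 0)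

/-- circular shift: `(S_ℓ x)_j = x_{j+ℓ}` -/
def shiftVec (d : ℕ) (ℓ : Fin d) (x : Fin d → ℂ) : Fin d → ℂ := fun j => x (j + ℓ)

section aux

variable {d δ : ℕ}

lemma my_circDist_eq (a b : Fin d) :
    circDist a b = min (b - a).val (d - (b - a).val) := by
  have hd : 0 < d := a.pos
  have hsub : (b - a).val = (b.val + (d - a.val)) % d := by
    rw [Fin.sub_def]; simp [Nat.add_comm]
  have ha := a.isLt; have hb := b.isLt
  have hm : (b.val + (d - a.val)) % d =
      if b.val + (d - a.val) < d then b.val + (d - a.val) else b.val + (d - a.val) - d := by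
    split
    · exact Nat.mod_eq_of_lt ‹_›
    · rw [Nat.mod_eq_sub_mod (by omega)]; exact Nat.mod_eq_of_lt (by omega)
  unfold circDist
  split at hm <;> omega

lemma my_circDist_shift (a b ℓ : Fin d) : circDist (a + ℓ) (b + ℓ) = circDist a b := by
  have : NeZero d := ⟨a.pos.ne'⟩
  rw [my_circDist_eq, my_circDist_eq, add_sub_add_right_eq_sub]

lemma my_masks_supp (j : Fin (2*δ-1)) (k : Fin d) (h : masks d δ j k ≠ 0) :
    (k:ℕ) = 0 ∨ (k:ℕ) = ((j:ℕ)+1)/2 := by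
  unfold masks at h
  by_contra hc
  push_neg at hc
  have h2 : ¬ ((j:ℕ) ≠ 0 ∧ (j:ℕ) % 2 = 0 ∧ (k:ℕ) = (j:ℕ)/2) := by
    rintro ⟨h1, h2, h3⟩; omega
  simp [hc.1, hc.2, h2] at h

lemma my_gen_apply (ℓ : Fin d) (m : Fin d → ℂ) (u v : Fin d) :
    vecMulVec (shiftVec d ℓ m) (star (shiftVec d ℓ m)) u v
      = m (u+ℓ) * star (m (v+ℓ)) := rfl

lemma my_masks_j0 (hδ : 1 ≤ δ) (j : Fin (2*δ-1)) (hj : (j:ℕ) = 0) (k : Fin d) :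
    masks d δ j k = if (k:ℕ) = 0 then 1 else 0 := by
  unfold masks
  rw [hj]
  norm_num

lemma my_masks_odd (j : Fin (2*δ-1)) (t : ℕ) (hj : (j:ℕ) = 2*t-1) (ht : 1 ≤ t) (k : Fin d) :
    masks d δ j k = (if (k:ℕ) = 0 then 1 else 0) + (if (k:ℕ) = t then 1 else 0) := by
  unfold masks
  have h1 : (j:ℕ) % 2 = 1 := by omega
  have h2 : ((j:ℕ)+1)/2 = t := by omega
  have h3 : ¬ ((j:ℕ) ≠ 0 ∧ (j:ℕ) % 2 = 0 ∧ (k : ℕ) = (j : ℕ) / 2) := by rintro ⟨_,h,_⟩; omega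
  simp [h1, h2, h3]

lemma my_masks_even (j : Fin (2*δ-1)) (t : ℕ) (hj : (j:ℕ) = 2*t) (ht : 1 ≤ t) (k : Fin d) :
    masks d δ j k = (if (k:ℕ) = 0 then 1 else 0) + (if (k:ℕ) = t then Complex.I else 0) := by
  unfold masks
  have h1 : ¬ ((j:ℕ) % 2 = 1 ∧ (k:ℕ) = ((j:ℕ)+1)/2) := by rintro ⟨h,_⟩; omega
  have h2 : (j:ℕ) ≠ 0 := by omega
  have h3 : (j:ℕ)/2 = t := by omega
  have h4 : (j:ℕ) % 2 = 0 := by omega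
  simp [h1, h2, h3, h4]

lemma my_sub_val_zero_iff {u a : Fin d} : (u - a).val = 0 ↔ u = a := by
  haveI : NeZero d := ⟨a.pos.ne'⟩
  constructor
  · intro h
    have h2 : u - a = 0 := Fin.ext (by simpa using h)
    exact sub_eq_zero.mp h2
  · intro h; subst h; simp

lemma my_sub_val_eq_iff {u a : Fin d} {t : ℕ} (htd : t < d) :
    (u - a).val = t ↔ u = a + (⟨t, htd⟩ : Fin d) := by
  haveI : NeZero d := ⟨a.pos.ne'⟩
  constructor
  · intro h
    have h2 : u - a = (⟨t, htd⟩ : Fin d) := Fin.ext h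
    rw [sub_eq_iff_eq_add] at h2
    rw [h2, add_comm]
  · intro h
    subst h
    rw [add_sub_cancel_left]

lemma my_std_apply (a b u v : Fin d) :
    Matrix.single a b (1:ℂ) u v = (if u = a then (1:ℂ) else 0) * (if v = b then 1 else 0) := by
  simp only [Matrix.single, of_apply]
  split_ifs with h1 h2 h3 <;> simp_all

lemma my_combo_lemma (a b : Fin d) (hab : a ≠ b) (G1 G2 : Matrix (Fin d) (Fin d) ℂ)
    (e1 : ∀ u v, G1 u v =
      ((if u = a then 1 else 0) + (if u = b then 1 else 0)) *
      ((if v = a then 1 else 0) + (if v = b then 1 else 0)))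
    (e2 : ∀ u v, G2 u v =
      ((if u = a then 1 else 0) + Complex.I * (if u = b then 1 else 0)) *
      ((if v = a then 1 else 0) - Complex.I * (if v = b then 1 else 0))) :
    Matrix.single a b (1:ℂ) =
      (2:ℂ)⁻¹ • G1 + (Complex.I * 2⁻¹) • G2
        + (-(1+Complex.I) * 2⁻¹) • (Matrix.single a a 1 + Matrix.single b b 1) ∧
    Matrix.single b a (1:ℂ) =
      (2:ℂ)⁻¹ • G1 + (-(Complex.I * 2⁻¹)) • G2
        + (-(1-Complex.I) * 2⁻¹) • (Matrix.single a a 1 + Matrix.single b b 1) := by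
  constructor <;>
  · ext u v
    simp only [Matrix.add_apply, Matrix.smul_apply, smul_eq_mul, e1, e2, my_std_apply]
    by_cases hua : u = a <;> by_cases hub : u = b <;> by_cases hva : v = a <;>
      by_cases hvb : v = b <;> simp_all <;> ring_nf <;>
      norm_num [Complex.ext_iff]

noncomputable def myGenSpan (d δ : ℕ) : Submodule ℂ (Matrix (Fin d) (Fin d) ℂ) :=
  Submodule.span ℂ
    (Set.range fun p : Fin d × Fin (2 * δ - 1) =>
      Matrix.vecMulVec (shiftVec d p.1 (masks d δ p.2))
        (star (shiftVec d p.1 (masks d δ p.2))))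

lemma my_diag_mem (hδ : 1 ≤ δ) (a : Fin d) :
    Matrix.single a a 1 ∈ myGenSpan d δ := by
  haveI : NeZero d := ⟨a.pos.ne'⟩
  have h0 : 0 < 2*δ-1 := by omega
  have heq : Matrix.vecMulVec (shiftVec d (-a) (masks d δ ⟨0, h0⟩))
      (star (shiftVec d (-a) (masks d δ ⟨0, h0⟩))) = Matrix.single a a 1 := by
    ext u v
    rw [my_gen_apply]
    rw [my_masks_j0 hδ ⟨0, h0⟩ rfl (u + -a), my_masks_j0 hδ ⟨0, h0⟩ rfl (v + -a),
      ← sub_eq_add_neg, ← sub_eq_add_neg, my_std_apply]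
    simp only [my_sub_val_zero_iff]
    split_ifs <;> simp
  exact Submodule.subset_span ⟨(-a, ⟨0, h0⟩), heq⟩

lemma my_offdiag_mem (hδ : 1 ≤ δ) (a : Fin d) (t : ℕ) (ht1 : 1 ≤ t) (ht2 : t ≤ δ - 1)
    (htd : t < d) :
    Matrix.single a (a + (⟨t, htd⟩ : Fin d)) 1 ∈ myGenSpan d δ ∧
    Matrix.single (a + (⟨t, htd⟩ : Fin d)) a 1 ∈ myGenSpan d δ := by
  haveI : NeZero d := ⟨a.pos.ne'⟩
  have hab : a ≠ a + (⟨t, htd⟩ : Fin d) := by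
    intro h
    have h2 : (⟨t, htd⟩ : Fin d) = 0 := (left_eq_add.mp h)
    rw [Fin.ext_iff] at h2
    simp at h2; omega
  have hj1 : 2*t-1 < 2*δ-1 := by omega
  have hj2 : 2*t < 2*δ-1 := by omega
  set j1 : Fin (2*δ-1) := ⟨2*t-1, hj1⟩ with hj1d
  set j2 : Fin (2*δ-1) := ⟨2*t, hj2⟩ with hj2d
  set G1 := Matrix.vecMulVec (shiftVec d (-a) (masks d δ j1))
        (star (shiftVec d (-a) (masks d δ j1))) with hG1
  set G2 := Matrix.vecMulVec (shiftVec d (-a) (masks d δ j2))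
        (star (shiftVec d (-a) (masks d δ j2))) with hG2
  have hmem1 : G1 ∈ myGenSpan d δ := Submodule.subset_span ⟨(-a, j1), rfl⟩
  have hmem2 : G2 ∈ myGenSpan d δ := Submodule.subset_span ⟨(-a, j2), rfl⟩
  have hDa : Matrix.single a a 1 ∈ myGenSpan d δ := my_diag_mem hδ a
  have hDb : Matrix.single (a + (⟨t, htd⟩ : Fin d)) (a + (⟨t, htd⟩ : Fin d)) 1
      ∈ myGenSpan d δ := my_diag_mem hδ _
  have e1 : ∀ u v, G1 u v =
      ((if u = a then 1 else 0) + (if u = a + (⟨t, htd⟩ : Fin d) then 1 else 0)) *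
      ((if v = a then 1 else 0) + (if v = a + (⟨t, htd⟩ : Fin d) then 1 else 0)) := by
    intro u v
    rw [hG1, my_gen_apply, my_masks_odd j1 t rfl ht1 (u + -a), my_masks_odd j1 t rfl ht1 (v + -a),
      ← sub_eq_add_neg, ← sub_eq_add_neg]
    simp only [my_sub_val_zero_iff, my_sub_val_eq_iff htd]
    rw [star_add]
    congr 2 <;> split_ifs <;> simp
  have e2 : ∀ u v, G2 u v =
      ((if u = a then 1 else 0) + Complex.I * (if u = a + (⟨t, htd⟩ : Fin d) then 1 else 0)) *
      ((if v = a then 1 else 0) - Complex.I * (if v = a + (⟨t, htd⟩ : Fin d) then 1 else 0)) := by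
    intro u v
    rw [hG2, my_gen_apply, my_masks_even j2 t rfl ht1 (u + -a), my_masks_even j2 t rfl ht1 (v + -a),
      ← sub_eq_add_neg, ← sub_eq_add_neg]
    simp only [my_sub_val_zero_iff, my_sub_val_eq_iff htd]
    rw [star_add]
    congr 1
    · congr 1 <;> split_ifs <;> simp
    · rw [sub_eq_add_neg]
      congr 1
      · split_ifs <;> simp
      · split_ifs <;> simp [Complex.conj_I]
  obtain ⟨k1, k2⟩ := my_combo_lemma a (a + (⟨t, htd⟩ : Fin d)) hab G1 G2 e1 e2
  constructor
  · rw [k1]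
    exact Submodule.add_mem _ (Submodule.add_mem _ (Submodule.smul_mem _ _ hmem1)
      (Submodule.smul_mem _ _ hmem2)) (Submodule.smul_mem _ _ (Submodule.add_mem _ hDa hDb))
  · rw [k2]
    exact Submodule.add_mem _ (Submodule.add_mem _ (Submodule.smul_mem _ _ hmem1)
      (Submodule.smul_mem _ _ hmem2)) (Submodule.smul_mem _ _ (Submodule.add_mem _ hDa hDb))

lemma my_std_mem (hδ : 1 ≤ δ) (hd : 2 * δ - 1 ≤ d) (a b : Fin d) (h : circDist a b < δ) :
    Matrix.single a b 1 ∈ myGenSpan d δ := by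
  haveI : NeZero d := ⟨a.pos.ne'⟩
  have hc := my_circDist_eq a b
  have hlt : (b - a).val < d := (b - a).isLt
  by_cases hn : (b - a).val < δ
  · by_cases h0 : (b - a).val = 0
    · have hba : b = a := my_sub_val_zero_iff.mp h0
      subst hba
      exact my_diag_mem hδ b
    · have hb : b = a + (⟨(b-a).val, hlt⟩ : Fin d) := (my_sub_val_eq_iff hlt).mp rfl
      rw [show b = a + (⟨(b-a).val, hlt⟩ : Fin d) from hb]
      exact (my_offdiag_mem hδ a _ (by omega) (by omega) hlt).1
  · have hdn : d - (b - a).val < δ := by omega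
    have h0 : (b - a).val ≠ 0 := by omega
    have hlt2 : d - (b - a).val < d := by omega
    have hav : (a - b).val = d - (b - a).val := by
      rw [show a - b = -(b - a) from (neg_sub b a).symm]
      rw [Fin.coe_neg]
      rw [Nat.mod_eq_of_lt (by omega)]
    have ha : a = b + (⟨d - (b-a).val, hlt2⟩ : Fin d) := (my_sub_val_eq_iff hlt2).mp hav
    rw [show a = b + (⟨d - (b-a).val, hlt2⟩ : Fin d) from ha]
    exact (my_offdiag_mem hδ b _ (by omega) (by omega) hlt2).2

lemma my_mem_band_iff (A : Matrix (Fin d) (Fin d) ℂ) :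
    A ∈ bandSubmodule d δ ↔ ∀ j k : Fin d, δ ≤ circDist j k → A j k = 0 := Iff.rfl

lemma my_span_eq_band (hδ : 1 ≤ δ) (hd : 2 * δ - 1 ≤ d) :
    myGenSpan d δ = bandSubmodule d δ := by
  apply le_antisymm
  · rw [myGenSpan, Submodule.span_le]
    rintro _ ⟨⟨ℓ, j⟩, rfl⟩
    rw [SetLike.mem_coe, my_mem_band_iff]
    intro u v huv
    show Matrix.vecMulVec (shiftVec d ℓ (masks d δ j)) (star (shiftVec d ℓ (masks d δ j))) u v = 0
    rw [my_gen_apply]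
    by_contra hne
    have h1 : masks d δ j (u + ℓ) ≠ 0 := fun h => hne (by simp [h])
    have h2' : masks d δ j (v + ℓ) ≠ 0 := by
      intro h; apply hne; rw [h]; simp
    have hs1 := my_masks_supp j (u + ℓ) h1
    have hs2 := my_masks_supp j (v + ℓ) h2'
    have hT : ((j:ℕ)+1)/2 ≤ δ - 1 := by
      have := j.isLt; omega
    have hshift := my_circDist_shift u v ℓ
    have huv2 : δ ≤ circDist (u + ℓ) (v + ℓ) := by rw [hshift]; exact huv
    unfold circDist at huv2
    have hu := (u + ℓ).isLt
    have hv := (v + ℓ).isLt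
    omega
  · intro A hA
    rw [my_mem_band_iff] at hA
    rw [show A = ∑ u : Fin d, ∑ v : Fin d, Matrix.single u v (A u v) from
      matrix_eq_sum_single A]
    apply Submodule.sum_mem
    intro u _
    apply Submodule.sum_mem
    intro v _
    by_cases hcd : δ ≤ circDist u v
    · rw [hA u v hcd]
      rw [show Matrix.single u v (0:ℂ) = 0 from single_zero u v]
      exact Submodule.zero_mem _
    · rw [show Matrix.single u v (A u v) = A u v • Matrix.single u v 1 by
        rw [smul_single]; simp]
      exact Submodule.smul_mem _ _ (my_std_mem hδ hd u v (by omega))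

lemma my_count_range (hδ : 1 ≤ δ) (hd : 2 * δ - 1 ≤ d) :
    ((Finset.range d).filter fun n => min n (d - n) < δ).card = 2 * δ - 1 := by
  have hset : ((Finset.range d).filter fun n => min n (d - n) < δ)
      = Finset.range δ ∪ Finset.Ico (d - δ + 1) d := by
    ext n
    simp only [Finset.mem_filter, Finset.mem_range, Finset.mem_union, Finset.mem_Ico]
    omega
  rw [hset, Finset.card_union_of_disjoint, Finset.card_range, Nat.card_Ico]
  · omega
  · rw [Finset.disjoint_left]
    intro n hn hn2
    simp only [Finset.mem_range] at hn
    simp only [Finset.mem_Ico] at hn2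
    omega

lemma my_count_fin (hδ : 1 ≤ δ) (hd : 2 * δ - 1 ≤ d) (hd0 : 0 < d) :
    ((Finset.univ : Finset (Fin d)).filter fun c => min c.val (d - c.val) < δ).card
      = 2 * δ - 1 := by
  rw [← my_count_range hδ hd]
  apply Finset.card_nbij' Fin.val (fun n => (⟨n % d, Nat.mod_lt _ hd0⟩ : Fin d))
  · intro c hc
    simp only [Finset.mem_coe, Finset.mem_filter, Finset.mem_univ, true_and] at hc
    simp only [Finset.mem_coe, Finset.mem_filter, Finset.mem_range]
    exact ⟨c.isLt, hc⟩
  · intro n hn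
    simp only [Finset.mem_coe, Finset.mem_filter, Finset.mem_range] at hn
    simp only [Finset.mem_coe, Finset.mem_filter, Finset.mem_univ, true_and]
    rw [Nat.mod_eq_of_lt hn.1]
    exact hn.2
  · intro c _
    exact Fin.ext (Nat.mod_eq_of_lt c.isLt)
  · intro n hn
    simp only [Finset.mem_coe, Finset.mem_filter, Finset.mem_range] at hn
    exact Nat.mod_eq_of_lt hn.1

lemma my_count_row (hδ : 1 ≤ δ) (hd : 2 * δ - 1 ≤ d) (a : Fin d) :
    ((Finset.univ : Finset (Fin d)).filter fun b => circDist a b < δ).card = 2 * δ - 1 := by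
  haveI : NeZero d := ⟨a.pos.ne'⟩
  rw [← my_count_fin hδ hd a.pos]
  apply Finset.card_equiv (Equiv.subRight a)
  intro b
  simp only [Finset.mem_coe, Finset.mem_filter, Finset.mem_univ, true_and, Equiv.subRight_apply]
  rw [my_circDist_eq]

lemma my_count_total (hδ : 1 ≤ δ) (hd : 2 * δ - 1 ≤ d) :
    ((Finset.univ : Finset (Fin d × Fin d)).filter fun p => circDist p.1 p.2 < δ).card
      = d * (2 * δ - 1) := by
  rw [Finset.card_eq_sum_card_fiberwise
    (f := Prod.fst) (t := (Finset.univ : Finset (Fin d))) (fun x _ => Finset.mem_univ _)]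
  have hfib : ∀ a : Fin d,
      ((Finset.univ.filter fun p : Fin d × Fin d => circDist p.1 p.2 < δ).filter
        fun p => p.1 = a).card
      = ((Finset.univ : Finset (Fin d)).filter fun b => circDist a b < δ).card := by
    intro a
    apply Finset.card_nbij' Prod.snd (fun b => (a, b))
    · intro p hp
      simp only [Finset.mem_coe, Finset.mem_filter, Finset.mem_univ, true_and] at hp ⊢
      obtain ⟨h1, h2⟩ := hp
      rw [← h2]; exact h1
    · intro b hb
      simp only [Finset.mem_coe, Finset.mem_filter, Finset.mem_univ, true_and] at hb ⊢
      exact ⟨hb, trivial⟩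
    · intro p hp
      simp only [Finset.mem_coe, Finset.mem_filter] at hp
      obtain ⟨h1, h2⟩ := hp
      obtain ⟨p1, p2⟩ := p
      simp only at h2
      rw [h2]
    · intro b _
      rfl
  simp_rw [hfib, my_count_row hδ hd]
  simp [Finset.card_univ, mul_comm]


lemma my_li (hδ : 1 ≤ δ) :
    LinearIndependent ℂ (fun p : {p : Fin d × Fin d // circDist p.1 p.2 < δ} =>
      Matrix.single p.1.1 p.1.2 (1:ℂ)) := by
  have h0 := (Matrix.stdBasis ℂ (Fin d) (Fin d)).linearIndependent
  have h1 := h0.comp (fun p : {p : Fin d × Fin d // circDist p.1 p.2 < δ} => p.1)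
    Subtype.val_injective
  convert h1 using 1
  funext p
  rw [Function.comp_apply, show (p.1 : Fin d × Fin d) = (p.1.1, p.1.2) from rfl,
    Matrix.stdBasis_eq_single]

lemma my_band_eq_span (hδ : 1 ≤ δ) (hd : 2 * δ - 1 ≤ d) :
    bandSubmodule d δ = Submodule.span ℂ
      (Set.range fun p : {p : Fin d × Fin d // circDist p.1 p.2 < δ} =>
        Matrix.single p.1.1 p.1.2 (1:ℂ)) := by
  apply le_antisymm
  · intro A hA
    rw [my_mem_band_iff] at hA
    rw [show A = ∑ u : Fin d, ∑ v : Fin d, Matrix.single u v (A u v) from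
      matrix_eq_sum_single A]
    apply Submodule.sum_mem
    intro u _
    apply Submodule.sum_mem
    intro v _
    by_cases hcd : δ ≤ circDist u v
    · rw [hA u v hcd]
      rw [show Matrix.single u v (0:ℂ) = 0 from single_zero u v]
      exact Submodule.zero_mem _
    · rw [show Matrix.single u v (A u v) = A u v • Matrix.single u v 1 by
        rw [smul_single]; simp]
      exact Submodule.smul_mem _ _
        (Submodule.subset_span ⟨⟨(u, v), (by omega : circDist u v < δ)⟩, rfl⟩)
  · rw [Submodule.span_le]
    rintro _ ⟨p, rfl⟩
    rw [SetLike.mem_coe, my_mem_band_iff]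
    intro j k h
    show Matrix.single p.1.1 p.1.2 (1:ℂ) j k = 0
    rw [my_std_apply]
    have hnot : ¬(j = p.1.1 ∧ k = p.1.2) := by
      rintro ⟨rfl, rfl⟩
      have := p.2
      omega
    by_cases h1 : j = p.1.1 <;> by_cases h2 : k = p.1.2 <;> simp [h1, h2] <;> tauto


end aux

theorem stmt_13 (d δ : ℕ) (hδ : 1 ≤ δ) (hd : 2 * δ - 1 ≤ d) :
    Submodule.span ℂ
        (Set.range fun p : Fin d × Fin (2 * δ - 1) =>
          Matrix.vecMulVec (shiftVec d p.1 (masks d δ p.2))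
            (star (shiftVec d p.1 (masks d δ p.2)))) =
      bandSubmodule d δ ∧
    Module.finrank ℂ (bandSubmodule d δ) = d * (2 * δ - 1) := by
  constructor
  · exact my_span_eq_band hδ hd
  · rw [my_band_eq_span hδ hd, finrank_span_eq_card (my_li hδ), Fintype.card_subtype,
      my_count_total hδ hd]
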